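/- Let m be a positive integer, let s > 0, and let Y_1, …, Y_m be real random variables (not assumed independent) on a common probability space such that each Y_i is Gaussian with mean 0 and variance σ_i² satisfying σ_i ≤ s. Then E[max(0, max_{i∈[m]} Y_i)] ≤ s · √(2 · ln(1 + m)). -/

import Mathlib

open MeasureTheory ProbabilityTheory Real
open scoped NNReal ENNReal

lemma gauss_key (v : ℝ≥0) (hv : v ≠ 0) (t x : ℝ) :
    gaussianPDFReal 0 v x * rexp (t * x)
      = rexp (t ^ 2 * v / 2) * gaussianPDFReal (t * v) v x := by
  have hv' : (v : ℝ) ≠ 0 := by exact_mod_cast hv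
  simp only [gaussianPDFReal]
  rw [mul_assoc, ← Real.exp_add, mul_left_comm, ← Real.exp_add]
  congr 1
  field_simp
  ring

lemma integrable_exp_gauss (v : ℝ≥0) (t : ℝ) :
    Integrable (fun x ↦ rexp (t * x)) (gaussianReal 0 v) := by
  by_cases hv : v = 0
  · rw [hv, gaussianReal_zero_var]
    have h : (fun x ↦ rexp (t * x)) =ᵐ[Measure.dirac (0:ℝ)] fun _ ↦ rexp (t * 0) := by
      rw [MeasureTheory.ae_dirac_eq]
      simp [Filter.EventuallyEq]
    exact (integrable_congr h).mpr (integrable_const _)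
  rw [gaussianReal_of_var_ne_zero _ hv, gaussianPDF_def]
  have : (fun x ↦ ENNReal.ofReal (gaussianPDFReal 0 v x))
      = fun x ↦ ((Real.toNNReal (gaussianPDFReal 0 v x) : ℝ≥0) : ℝ≥0∞) := by
    simp [ENNReal.ofReal]
  rw [this, integrable_withDensity_iff_integrable_smul
    ((measurable_gaussianPDFReal 0 v).real_toNNReal)]
  have : (fun x ↦ (Real.toNNReal (gaussianPDFReal 0 v x)) • rexp (t * x))
      = fun x ↦ rexp (t ^ 2 * v / 2) * gaussianPDFReal (t * v) v x := by
    ext x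
    rw [NNReal.smul_def, smul_eq_mul, Real.coe_toNNReal _ (gaussianPDFReal_nonneg 0 v x),
      gauss_key v hv]
  rw [this]
  exact (integrable_gaussianPDFReal _ _).const_mul _

lemma integral_exp_gauss (v : ℝ≥0) (t : ℝ) :
    ∫ x, rexp (t * x) ∂(gaussianReal 0 v) = rexp (t ^ 2 * v / 2) := by
  by_cases hv : v = 0
  · simp [hv, gaussianReal_zero_var]
  rw [gaussianReal_of_var_ne_zero _ hv, gaussianPDF_def]
  have h : (fun x ↦ ENNReal.ofReal (gaussianPDFReal 0 v x))
      = fun x ↦ ((Real.toNNReal (gaussianPDFReal 0 v x) : ℝ≥0) : ℝ≥0∞) := by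
    simp [ENNReal.ofReal]
  rw [h, integral_withDensity_eq_integral_smul
    ((measurable_gaussianPDFReal 0 v).real_toNNReal)]
  have h2 : (fun x ↦ (Real.toNNReal (gaussianPDFReal 0 v x)) • rexp (t * x))
      = fun x ↦ rexp (t ^ 2 * v / 2) * gaussianPDFReal (t * v) v x := by
    ext x
    rw [NNReal.smul_def, smul_eq_mul, Real.coe_toNNReal _ (gaussianPDFReal_nonneg 0 v x),
      gauss_key v hv]
  simp only [h2]
  rw [integral_const_mul, integral_gaussianPDFReal_eq_one _ hv, mul_one]

/-- The expected positive part of the maximum of `m` centered Gaussian random variables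
(not necessarily independent), each with standard deviation at most `s`, is at most
`s * √(2 ln(1+m))`. -/
theorem expected_max_gaussians_bound
    (m : ℕ) (hm : 0 < m) (s : ℝ) (hs : 0 < s)
    (Ω : Type) [MeasurableSpace Ω] (P : Measure Ω) [IsProbabilityMeasure P]
    (Y : Fin m → Ω → ℝ) (σ : Fin m → ℝ)
    (hmeas : ∀ i, Measurable (Y i))
    (hσ0 : ∀ i, 0 ≤ σ i) (hσs : ∀ i, σ i ≤ s)
    (hY : ∀ i, Measure.map (Y i) P = gaussianReal 0 (Real.toNNReal ((σ i) ^ 2))) :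
    (∫ ω, max 0 (⨆ i, Y i ω) ∂P) ≤ s * Real.sqrt (2 * Real.log (1 + m)) := by
  haveI : Nonempty (Fin m) := Fin.pos_iff_nonempty.mp hm
  set L : ℝ := Real.log (1 + m) with hL_def
  have hm1 : (1:ℝ) ≤ m := Nat.one_le_cast.mpr hm
  have hL : 0 < L := Real.log_pos (by linarith)
  set β : ℝ := Real.sqrt (2 * L) / s with hβ_def
  have hβ : 0 < β := div_pos (Real.sqrt_pos.mpr (by linarith)) hs
  set M : Ω → ℝ := fun ω ↦ max 0 (⨆ i, Y i ω) with hM_def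
  have hMmeas : Measurable M := measurable_const.max (Measurable.iSup hmeas)
  have hMnonneg : ∀ ω, 0 ≤ M ω := fun ω ↦ le_max_left _ _
  -- integrability and value of exp moments
  have hint_exp : ∀ i, Integrable (fun ω ↦ rexp (β * Y i ω)) P := by
    intro i
    have h := integrable_exp_gauss (Real.toNNReal ((σ i) ^ 2)) β
    rw [← hY i, integrable_map_measure h.aestronglyMeasurable (hmeas i).aemeasurable] at h
    exact h
  have hint_sum : Integrable (fun ω ↦ 1 + ∑ i, rexp (β * Y i ω)) P :=
    (integrable_const 1).add (integrable_finset_sum _ fun i _ ↦ hint_exp i)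
  have hintegral_exp : ∀ i, ∫ ω, rexp (β * Y i ω) ∂P = rexp (β ^ 2 * (σ i) ^ 2 / 2) := by
    intro i
    have h1 : ∫ ω, rexp (β * Y i ω) ∂P = ∫ x, rexp (β * x) ∂(Measure.map (Y i) P) :=
      (integral_map (hmeas i).aemeasurable
        (Measurable.aestronglyMeasurable (by fun_prop : Measurable fun x : ℝ ↦ rexp (β * x)))).symm
    rw [h1, hY i, integral_exp_gauss]
    congr 2
    rw [Real.coe_toNNReal _ (sq_nonneg _)]
  -- pointwise bound
  have hpt : ∀ ω, rexp (β * M ω) ≤ 1 + ∑ i, rexp (β * Y i ω) := by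
    intro ω
    have hsum : 0 ≤ ∑ i, rexp (β * Y i ω) :=
      Finset.sum_nonneg fun i _ ↦ (Real.exp_pos _).le
    obtain ⟨j, hj⟩ := exists_eq_ciSup_of_finite (f := fun i ↦ Y i ω)
    rcases le_or_gt (⨆ i, Y i ω) 0 with h | h
    · have hM0 : M ω = 0 := max_eq_left h
      rw [hM0, mul_zero, Real.exp_zero]
      linarith
    · have hMω : M ω = Y j ω := by
        rw [hM_def]
        simp only
        rw [max_eq_right h.le, ← hj]
      rw [hMω]
      have := Finset.single_le_sum (f := fun i ↦ rexp (β * Y i ω))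
        (fun i _ ↦ (Real.exp_pos _).le) (Finset.mem_univ j)
      linarith
  -- integrability of exp (β M) and of M
  have hint_expM : Integrable (fun ω ↦ rexp (β * M ω)) P := by
    refine hint_sum.mono' ?_ (ae_of_all _ fun ω ↦ ?_)
    · exact (Real.measurable_exp.comp (hMmeas.const_mul β)).aestronglyMeasurable
    · rw [Real.norm_eq_abs, abs_of_nonneg (Real.exp_pos _).le]
      exact hpt ω
  have hintM : Integrable M P := by
    refine (hint_expM.const_mul β⁻¹).mono' hMmeas.aestronglyMeasurable
      (ae_of_all _ fun ω ↦ ?_)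
    rw [Real.norm_eq_abs, abs_of_nonneg (hMnonneg ω)]
    have h1 : β * M ω ≤ rexp (β * M ω) := by
      linarith [Real.add_one_le_exp (β * M ω)]
    have h2 := mul_le_mul_of_nonneg_left h1 (inv_nonneg.mpr hβ.le)
    calc M ω = β⁻¹ * (β * M ω) := by field_simp
    _ ≤ β⁻¹ * rexp (β * M ω) := h2
  -- Jensen
  have hJ : rexp (β * ∫ ω, M ω ∂P) ≤ ∫ ω, rexp (β * M ω) ∂P := by
    have h := ConvexOn.map_integral_le (μ := P) (f := fun ω ↦ β * M ω)
      convexOn_exp Real.continuous_exp.continuousOn isClosed_univ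
      (ae_of_all _ fun ω ↦ Set.mem_univ _) (hintM.const_mul β) hint_expM
    simpa [MeasureTheory.integral_const_mul] using h
  -- bounding the integral of exp (β M)
  have hβ2 : β ^ 2 * s ^ 2 / 2 = L := by
    rw [hβ_def, div_pow, Real.sq_sqrt (by linarith)]
    field_simp
  have hIle : ∫ ω, rexp (β * M ω) ∂P ≤ (1 + m) * rexp L := by
    have h1 : ∫ ω, rexp (β * M ω) ∂P ≤ ∫ ω, (1 + ∑ i, rexp (β * Y i ω)) ∂P :=
      integral_mono hint_expM hint_sum hpt
    have h2 : ∫ ω, (1 + ∑ i, rexp (β * Y i ω)) ∂P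
        = 1 + ∑ i, rexp (β ^ 2 * (σ i) ^ 2 / 2) := by
      rw [integral_add (integrable_const 1) (integrable_finset_sum _ fun i _ ↦ hint_exp i),
        integral_const, integral_finset_sum _ fun i _ ↦ hint_exp i]
      simp only [probReal_univ, smul_eq_mul, one_mul]
      congr 1
      exact Finset.sum_congr rfl fun i _ ↦ hintegral_exp i
    have h3 : ∀ i : Fin m, rexp (β ^ 2 * (σ i) ^ 2 / 2) ≤ rexp L := by
      intro i
      rw [← hβ2]
      apply Real.exp_le_exp.mpr
      have : (σ i) ^ 2 ≤ s ^ 2 := pow_le_pow_left₀ (hσ0 i) (hσs i) 2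
      nlinarith [sq_nonneg β]
    have h4 : ∑ i, rexp (β ^ 2 * (σ i) ^ 2 / 2) ≤ (m : ℝ) * rexp L := by
      calc ∑ i, rexp (β ^ 2 * (σ i) ^ 2 / 2) ≤ ∑ _i : Fin m, rexp L :=
          Finset.sum_le_sum fun i _ ↦ h3 i
      _ = (m : ℝ) * rexp L := by simp [Finset.sum_const, mul_comm]
    have h5 : (1 : ℝ) ≤ rexp L := by
      rw [← Real.exp_zero]
      exact Real.exp_le_exp.mpr hL.le
    calc ∫ ω, rexp (β * M ω) ∂P ≤ 1 + ∑ i, rexp (β ^ 2 * (σ i) ^ 2 / 2) := h2 ▸ h1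
    _ ≤ 1 + (m : ℝ) * rexp L := by linarith
    _ ≤ (1 + m) * rexp L := by nlinarith
  -- take logs
  have hlog : β * ∫ ω, M ω ∂P ≤ 2 * L := by
    have h2 : rexp (β * ∫ ω, M ω ∂P) ≤ (1 + m) * rexp L := hJ.trans hIle
    calc β * ∫ ω, M ω ∂P = Real.log (rexp (β * ∫ ω, M ω ∂P)) := (Real.log_exp _).symm
    _ ≤ Real.log ((1 + m) * rexp L) := Real.log_le_log (Real.exp_pos _) h2
    _ = L + L := by
        rw [Real.log_mul (by positivity) (Real.exp_ne_zero _), Real.log_exp, hL_def]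
    _ = 2 * L := by ring
  -- conclude
  have hsqrt : Real.sqrt (2 * L) * Real.sqrt (2 * L) = 2 * L :=
    Real.mul_self_sqrt (by linarith)
  have hfin : (∫ ω, M ω ∂P) ≤ 2 * L / β := by
    rw [le_div_iff₀ hβ]
    linarith [hlog]
  have heq : 2 * L / β = s * Real.sqrt (2 * L) := by
    rw [hβ_def, div_div_eq_mul_div, div_eq_iff (by positivity : Real.sqrt (2 * L) ≠ 0)]
    nlinarith [hsqrt]
  calc (∫ ω, M ω ∂P) ≤ 2 * L / β := hfin
  _ = s * Real.sqrt (2 * L) := heq
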